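/- One-shot bound relating Rényi divergence from uniformity to the two-parameter Rényi conditional entropy: let β ∈ (0,1) and α ∈ [β,1). Then (α(1−β)/(β(1−α))) · D_β( P_XY ‖ U_𝒳 × P_Y ) ≥ log|𝒳| − H̃_{α,β}(X|Y)_{P_XY}, where U_𝒳 × P_Y is the probability distribution on 𝒳×𝒴 given by (x,y) ↦ P_Y(y)/|𝒳|. -/

import Mathlib

open scoped BigOperators

noncomputable section

variable {𝓧 𝓨 : Type*} [Fintype 𝓧] [Fintype 𝓨]

/-- Marginal distribution of the second component. -/
def pY (P : 𝓧 × 𝓨 → ℝ) (y : 𝓨) : ℝ := ∑ x, P (x, y)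

/-- Conditional distribution `P_{X|Y}(x|y)`. -/
def pCond (P : 𝓧 × 𝓨 → ℝ) (x : 𝓧) (y : 𝓨) : ℝ := P (x, y) / pY P y

/-- Two-parameter Rényi conditional entropy `H̃_{α,β}(X|Y)`. -/
def Htilde (P : 𝓧 × 𝓨 → ℝ) (α β : ℝ) : ℝ :=
  α / (β * (1 - α)) *
    Real.logb 2 (∑ y, if 0 < pY P y then
      pY P y * (∑ x, pCond P x y ^ α) ^ (β / α) else 0)

/-- Order-`β` Rényi divergence between two probability distributions (real-valued
formula, used for `β ∈ (0,1)`). -/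
def renyiDiv {𝓩 : Type*} [Fintype 𝓩] (β : ℝ) (P Q : 𝓩 → ℝ) : ℝ :=
  1 / (β - 1) * Real.logb 2 (∑ z, if 0 < P z then P z ^ β * Q z ^ (1 - β) else 0)

/-- Jensen-type power-mean inequality for nonnegative vectors. -/
lemma jensen_aux {𝓧 : Type*} [Fintype 𝓧] [Nonempty 𝓧] (q : 𝓧 → ℝ) (hq : ∀ x, 0 ≤ q x)
    (α β : ℝ) (hβ0 : 0 < β) (hβα : β ≤ α) :
    ∑ x, q x ^ β ≤ (Fintype.card 𝓧 : ℝ) ^ ((1:ℝ) - β / α) * (∑ x, q x ^ α) ^ (β / α) := by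
  have hα0 : 0 < α := lt_of_lt_of_le hβ0 hβα
  set N : ℝ := (Fintype.card 𝓧 : ℝ) with hN
  have hN0 : (0:ℝ) < N := by
    have : 0 < Fintype.card 𝓧 := Fintype.card_pos
    rw [hN]; exact_mod_cast this
  have hw : ∑ _x : 𝓧, (1/N) = 1 := by
    rw [Finset.sum_const, Finset.card_univ, nsmul_eq_mul]
    field_simp
    exact hN.symm
  have h1 := Real.rpow_arith_mean_le_arith_mean_rpow Finset.univ (fun _ => 1/N)
      (fun x => q x ^ β) (fun i _ => by positivity) hw
      (fun i _ => Real.rpow_nonneg (hq i) β) ((one_le_div hβ0).2 hβα)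
  simp only [← Finset.mul_sum] at h1
  have hqz : ∀ x : 𝓧, (q x ^ β) ^ (α/β) = q x ^ α := by
    intro x
    rw [← Real.rpow_mul (hq x)]
    congr 1
    field_simp
  simp only [hqz] at h1
  have hsumβ : 0 ≤ ∑ x, q x ^ β := Finset.sum_nonneg fun x _ => Real.rpow_nonneg (hq x) β
  have hsumα : 0 ≤ ∑ x, q x ^ α := Finset.sum_nonneg fun x _ => Real.rpow_nonneg (hq x) α
  have h2 : ((1/N * ∑ x, q x ^ β) ^ (α/β)) ^ (β/α) ≤ (1/N * ∑ x, q x ^ α) ^ (β/α) :=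
    Real.rpow_le_rpow (Real.rpow_nonneg (by positivity) _) h1 (le_of_lt (div_pos hβ0 hα0))
  rw [← Real.rpow_mul (by positivity)] at h2
  have hab : α/β * (β/α) = 1 := by field_simp
  rw [hab, Real.rpow_one] at h2
  have h3 : (1/N * ∑ x, q x ^ α) ^ (β/α) = (1/N) ^ (β/α) * (∑ x, q x ^ α) ^ (β/α) :=
    Real.mul_rpow (by positivity) hsumα
  rw [h3] at h2
  have h4 : ∑ x, q x ^ β ≤ N * ((1/N) ^ (β/α) * (∑ x, q x ^ α) ^ (β/α)) := by
    calc ∑ x, q x ^ β = N * (1/N * ∑ x, q x ^ β) := by field_simp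
    _ ≤ N * ((1/N) ^ (β/α) * (∑ x, q x ^ α) ^ (β/α)) :=
        mul_le_mul_of_nonneg_left h2 (le_of_lt hN0)
  refine h4.trans_eq ?_
  have h5 : (1/N : ℝ) ^ (β/α) = 1 / N ^ (β/α) := by
    rw [Real.div_rpow zero_le_one hN0.le, Real.one_rpow]
  rw [h5, Real.rpow_sub hN0, Real.rpow_one]
  ring

/-- one-shot bound relating the Rényi divergence from uniformity to
the two-parameter Rényi conditional entropy: for `β ∈ (0,1)` and `α ∈ [β,1)`,
`(α(1−β)/(β(1−α)))·D_β(P_XY‖U_𝒳×P_Y) ≥ log|𝒳| − H̃_{α,β}(X|Y)`. -/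
theorem renyiDiv_uniform_lower_bound
    [Nonempty 𝓧] [Nonempty 𝓨]
    (P : 𝓧 × 𝓨 → ℝ) (hP : ∀ p, 0 ≤ P p) (hPsum : ∑ p, P p = 1)
    (α β : ℝ) (hβ0 : 0 < β) (hβ1 : β < 1) (hβα : β ≤ α) (hα1 : α < 1) :
    α * (1 - β) / (β * (1 - α)) *
        renyiDiv β P (fun p : 𝓧 × 𝓨 => pY P p.2 / (Fintype.card 𝓧 : ℝ)) ≥
      Real.logb 2 (Fintype.card 𝓧) - Htilde P α β := by
  classical
  have hα0 : 0 < α := lt_of_lt_of_le hβ0 hβα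
  have h1α : (0:ℝ) < 1 - α := by linarith
  unfold renyiDiv Htilde
  set N : ℝ := (Fintype.card 𝓧 : ℝ) with hN
  have hN0 : (0:ℝ) < N := by
    have : 0 < Fintype.card 𝓧 := Fintype.card_pos
    rw [hN]; exact_mod_cast this
  have hpY0 : ∀ y, 0 ≤ pY P y := fun y => Finset.sum_nonneg fun x _ => hP _
  have hpYle : ∀ x y, P (x, y) ≤ pY P y := fun x y =>
    Finset.single_le_sum (f := fun x => P (x, y)) (fun x _ => hP (x, y)) (Finset.mem_univ x)
  have hpC0 : ∀ x y, 0 ≤ pCond P x y := fun x y => div_nonneg (hP _) (hpY0 y)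
  obtain ⟨p₀, hp₀⟩ : ∃ p, 0 < P p := by
    by_contra h
    push_neg at h
    have hz : ∀ p, P p = 0 := fun p => le_antisymm (h p) (hP p)
    simp [hz] at hPsum
  set S := ∑ z : 𝓧 × 𝓨, if 0 < P z then P z ^ β * (pY P z.2 / N) ^ (1 - β) else 0 with hSdef
  set T := ∑ y, if 0 < pY P y then pY P y * (∑ x, pCond P x y ^ α) ^ (β / α) else 0 with hTdef
  have hSnn : ∀ z : 𝓧 × 𝓨,
      0 ≤ (if 0 < P z then P z ^ β * (pY P z.2 / N) ^ (1 - β) else 0) := by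
    intro z
    split
    · have h1 := hpY0 z.2
      positivity
    · exact le_rfl
  have hy₀ : 0 < pY P p₀.2 := lt_of_lt_of_le hp₀ (hpYle p₀.1 p₀.2)
  have hS0 : 0 < S := by
    rw [hSdef]
    apply Finset.sum_pos' (fun z _ => hSnn z)
    refine ⟨p₀, Finset.mem_univ _, ?_⟩
    rw [if_pos hp₀]
    positivity
  have hTnn : ∀ y,
      0 ≤ (if 0 < pY P y then pY P y * (∑ x, pCond P x y ^ α) ^ (β / α) else 0) := by
    intro y
    split
    · have h1 : 0 ≤ ∑ x, pCond P x y ^ α :=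
        Finset.sum_nonneg fun x _ => Real.rpow_nonneg (hpC0 x y) α
      have h2 := hpY0 y
      positivity
    · exact le_rfl
  have hT0 : 0 < T := by
    rw [hTdef]
    apply Finset.sum_pos' (fun y _ => hTnn y)
    refine ⟨p₀.2, Finset.mem_univ _, ?_⟩
    rw [if_pos hy₀]
    have hc : 0 < pCond P p₀.1 p₀.2 := div_pos hp₀ hy₀
    have hs : 0 < ∑ x, pCond P x p₀.2 ^ α := by
      apply Finset.sum_pos' (fun x _ => Real.rpow_nonneg (hpC0 x p₀.2) α)
      exact ⟨p₀.1, Finset.mem_univ _, Real.rpow_pos_of_pos hc α⟩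
    positivity
  -- per-y bound
  have hy_bound : ∀ y : 𝓨,
      (∑ x, if 0 < P (x, y) then P (x, y) ^ β * (pY P y / N) ^ (1 - β) else 0) ≤
        N ^ (β - β/α) *
          (if 0 < pY P y then pY P y * (∑ x, pCond P x y ^ α) ^ (β / α) else 0) := by
    intro y
    by_cases hy : 0 < pY P y
    · rw [if_pos hy]
      have hterm : ∀ x, (if 0 < P (x, y) then P (x, y) ^ β * (pY P y / N) ^ (1 - β) else 0)
          = pY P y / N ^ ((1:ℝ) - β) * pCond P x y ^ β := by
        intro x
        rcases eq_or_lt_of_le (hP (x, y)) with h0 | hpos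
        · rw [if_neg (by rw [← h0]; exact lt_irrefl 0)]
          have : pCond P x y = 0 := by rw [pCond, ← h0, zero_div]
          rw [this, Real.zero_rpow (ne_of_gt hβ0), mul_zero]
        · rw [if_pos hpos]
          have hPeq : P (x, y) = pCond P x y * pY P y := by
            rw [pCond, div_mul_cancel₀ _ (ne_of_gt hy)]
          have hpy1 : pY P y ^ β * pY P y ^ (1 - β) = pY P y := by
            rw [← Real.rpow_add hy, show β + (1 - β) = (1:ℝ) from by ring, Real.rpow_one]
          rw [hPeq, Real.mul_rpow (hpC0 x y) (hpY0 y), Real.div_rpow (hpY0 y) hN0.le]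
          conv_rhs => rw [← hpy1]
          ring
      rw [Finset.sum_congr rfl fun x _ => hterm x, ← Finset.mul_sum]
      have hJ := jensen_aux (fun x => pCond P x y) (fun x => hpC0 x y) α β hβ0 hβα
      calc pY P y / N ^ ((1:ℝ) - β) * ∑ x, pCond P x y ^ β
          ≤ pY P y / N ^ ((1:ℝ) - β) *
              (N ^ ((1:ℝ) - β/α) * (∑ x, pCond P x y ^ α) ^ (β/α)) :=
            mul_le_mul_of_nonneg_left hJ (by positivity)
        _ = N ^ ((1:ℝ) - β/α) / N ^ ((1:ℝ) - β) *
              (pY P y * (∑ x, pCond P x y ^ α) ^ (β/α)) := by ring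
        _ = N ^ (β - β/α) * (pY P y * (∑ x, pCond P x y ^ α) ^ (β/α)) := by
            rw [← Real.rpow_sub hN0]
            norm_num
    · rw [if_neg hy, mul_zero]
      apply le_of_eq
      apply Finset.sum_eq_zero
      intro x _
      rw [if_neg (fun hx => hy (lt_of_lt_of_le hx (hpYle x y)))]
  have hST : S ≤ N ^ (β - β/α) * T := by
    calc S = ∑ y, ∑ x, (if 0 < P (x, y) then P (x, y) ^ β * (pY P y / N) ^ (1 - β) else 0) := by
          rw [hSdef, Fintype.sum_prod_type_right]
      _ ≤ ∑ y, N ^ (β - β/α) *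
            (if 0 < pY P y then pY P y * (∑ x, pCond P x y ^ α) ^ (β / α) else 0) :=
          Finset.sum_le_sum fun y _ => hy_bound y
      _ = N ^ (β - β/α) * T := by rw [hTdef, Finset.mul_sum]
  -- logarithmic manipulation
  have hc : (0:ℝ) < α / (β * (1 - α)) := div_pos hα0 (mul_pos hβ0 h1α)
  have hlogS : Real.logb 2 S ≤ (β - β/α) * Real.logb 2 N + Real.logb 2 T := by
    calc Real.logb 2 S ≤ Real.logb 2 (N ^ (β - β/α) * T) :=
          Real.logb_le_logb_of_le one_lt_two hS0 hST
      _ = Real.logb 2 (N ^ (β - β/α)) + Real.logb 2 T :=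
          Real.logb_mul (ne_of_gt (Real.rpow_pos_of_pos hN0 _)) (ne_of_gt hT0)
      _ = (β - β/α) * Real.logb 2 N + Real.logb 2 T := by
          rw [Real.logb_rpow_eq_mul_logb_of_pos hN0]
  have key : Real.logb 2 N ≤
      α / (β * (1 - α)) * Real.logb 2 T - α / (β * (1 - α)) * Real.logb 2 S := by
    have h1 : α / (β * (1 - α)) * Real.logb 2 S ≤
        α / (β * (1 - α)) * ((β - β/α) * Real.logb 2 N + Real.logb 2 T) :=
      mul_le_mul_of_nonneg_left hlogS hc.le
    have h2 : α / (β * (1 - α)) * (β - β/α) = -1 := by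
      field_simp
      ring
    have h3 : α / (β * (1 - α)) * ((β - β/α) * Real.logb 2 N + Real.logb 2 T)
        = -Real.logb 2 N + α / (β * (1 - α)) * Real.logb 2 T := by
      rw [mul_add, ← mul_assoc, h2]
      ring
    rw [h3] at h1
    linarith
  have hcoef : α * (1 - β) / (β * (1 - α)) * (1 / (β - 1) * Real.logb 2 S)
      = -(α / (β * (1 - α)) * Real.logb 2 S) := by
    have hβ1' : β - 1 ≠ 0 := by intro h; linarith
    have hd : β * (1 - α) ≠ 0 := ne_of_gt (mul_pos hβ0 h1α)
    field_simp
    ring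
  rw [ge_iff_le, hcoef]
  linarith
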